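/- Let X be a finite-dimensional complex inner product space and E a complex inner product space, and let A : X → X and C : X → E be linear maps such that A* A + C* C = I and every eigenvalue of A lies in the open unit disc. Then for every x ∈ X the sequence (C (Aⁿ x))_{n≥0} is square-summable and ∑_{n=0}^{∞} ‖C (Aⁿ x)‖² = ‖x‖²; in other words, the observability operator Γ defined by Γ x = (C x, C A x, C A² x, …) is a linear isometry from X into ℓ²(ℕ, E). -/

import Mathlib

open Filter Topology ENNReal NNReal

/-- If `A : X → X` and `C : X → E` satisfy `A* A + C* C = I` (expressed via inner
products, since `E` need not be finite-dimensional) and all eigenvalues of `A` lie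
in the open unit disc, then the observability operator `Γ x = (C x, C A x, …)` is an
isometry into `ℓ²(ℕ, E)`: for every `x` the sequence `(‖C (Aⁿ x)‖²)` is summable with
sum `‖x‖²`. -/
theorem stmt_1
    {X E : Type*}
    [NormedAddCommGroup X] [InnerProductSpace ℂ X] [FiniteDimensional ℂ X]
    [NormedAddCommGroup E] [InnerProductSpace ℂ E]
    (A : X →ₗ[ℂ] X) (C : X →ₗ[ℂ] E)
    (hAC : ∀ x y : X,
      (inner ℂ (A x) (A y) : ℂ) + (inner ℂ (C x) (C y) : ℂ) = (inner ℂ x y : ℂ))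
    (hA : ∀ μ ∈ spectrum ℂ A, ‖μ‖ < 1) :
    ∀ x : X, HasSum (fun n : ℕ => ‖C ((A ^ n) x)‖ ^ 2) (‖x‖ ^ 2) := by
  intro x
  -- key pointwise norm identity
  have key : ∀ y : X, ‖C y‖ ^ 2 = ‖y‖ ^ 2 - ‖A y‖ ^ 2 := by
    intro y
    have h := hAC y y
    rw [inner_self_eq_norm_sq_to_K, inner_self_eq_norm_sq_to_K,
      inner_self_eq_norm_sq_to_K] at h
    have h' : ‖A y‖ ^ 2 + ‖C y‖ ^ 2 = ‖y‖ ^ 2 := by exact_mod_cast h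
    linarith
  -- the powers of A applied to x tend to zero
  have hzero : Tendsto (fun n : ℕ => ‖(A ^ n) x‖) atTop (𝓝 0) := by
    rcases subsingleton_or_nontrivial X with hX | hX
    · have : ∀ n : ℕ, (A ^ n) x = 0 := fun n => Subsingleton.elim _ _
      simp [this]
    · set A' : X →L[ℂ] X := Module.End.toContinuousLinearMap (𝕜 := ℂ) X A with hA'
      have hpow : ∀ (n : ℕ) (y : X), (A' ^ n) y = (A ^ n) y := by
        intro n y
        rw [hA', ← map_pow]
        rfl
      have hspec : spectrum ℂ A' = spectrum ℂ A :=
        AlgEquiv.spectrum_eq (Module.End.toContinuousLinearMap (𝕜 := ℂ) X) A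
      have hr : spectralRadius ℂ A' < 1 := by
        have := spectrum.spectralRadius_lt_of_forall_lt A' (r := 1)
          (fun z hz => by
            have := hA z (hspec ▸ hz)
            simpa [← NNReal.coe_lt_coe, coe_nnnorm] using this)
        simpa using this
      obtain ⟨c, hc1, hc2⟩ := ENNReal.lt_iff_exists_nnreal_btwn.mp hr
      have hgel := spectrum.pow_nnnorm_pow_one_div_tendsto_nhds_spectralRadius A'
      have hev : ∀ᶠ n : ℕ in atTop,
          (‖A' ^ n‖₊ : ℝ≥0∞) ^ (1 / (n : ℝ)) < (c : ℝ≥0∞) :=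
        hgel.eventually_lt_const hc1
      have hev2 : ∀ᶠ n : ℕ in atTop, ‖A' ^ n‖ ≤ (c : ℝ) ^ n := by
        filter_upwards [hev, eventually_ge_atTop 1] with n hn hn1
        have hnpos : (0 : ℝ) < n := by exact_mod_cast hn1
        have h3 : ((‖A' ^ n‖₊ : ℝ≥0∞) ^ (1 / (n : ℝ))) ^ (n : ℝ)
            ≤ ((c : ℝ≥0∞)) ^ (n : ℝ) :=
          ENNReal.rpow_le_rpow hn.le (le_of_lt hnpos)
        rw [← ENNReal.rpow_mul, one_div, inv_mul_cancel₀ (ne_of_gt hnpos),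
          ENNReal.rpow_one, ENNReal.rpow_natCast, ← ENNReal.coe_pow,
          ENNReal.coe_le_coe] at h3
        calc ‖A' ^ n‖ = ((‖A' ^ n‖₊ : ℝ≥0) : ℝ) := rfl
        _ ≤ ((c ^ n : ℝ≥0) : ℝ) := by exact_mod_cast h3
        _ = (c : ℝ) ^ n := by push_cast; ring
      have hc2' : (c : ℝ) < 1 := by exact_mod_cast hc2
      have hgeo : Tendsto (fun n : ℕ => (c : ℝ) ^ n * ‖x‖) atTop (𝓝 0) := by
        simpa using
          (tendsto_pow_atTop_nhds_zero_of_lt_one c.coe_nonneg hc2').mul_const ‖x‖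
      refine squeeze_zero' (Eventually.of_forall fun n => norm_nonneg _) ?_ hgeo
      filter_upwards [hev2] with n hn
      calc ‖(A ^ n) x‖ = ‖(A' ^ n) x‖ := by rw [hpow]
      _ ≤ ‖A' ^ n‖ * ‖x‖ := (A' ^ n).le_opNorm x
      _ ≤ (c : ℝ) ^ n * ‖x‖ := by
          exact mul_le_mul_of_nonneg_right hn (norm_nonneg x)
  have hzero2 : Tendsto (fun n : ℕ => ‖(A ^ n) x‖ ^ 2) atTop (𝓝 0) := by
    simpa using hzero.pow 2
  -- telescoping partial sums
  have hsum : ∀ N : ℕ,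
      ∑ i ∈ Finset.range N, ‖C ((A ^ i) x)‖ ^ 2 = ‖x‖ ^ 2 - ‖(A ^ N) x‖ ^ 2 := by
    intro N
    induction N with
    | zero => simp
    | succ n ih =>
      rw [Finset.sum_range_succ, ih, key ((A ^ n) x)]
      have : A ((A ^ n) x) = (A ^ (n + 1)) x := by
        rw [pow_succ']
        rfl
      rw [this]
      ring
  rw [hasSum_iff_tendsto_nat_of_nonneg (fun n => sq_nonneg _)]
  simp only [hsum]
  simpa using tendsto_const_nhds.sub hzero2
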